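/- arXiv:2005.04657 — 2 statements merged into one kernel-verified Lean document; each statement's English description precedes it below -/
import Mathlib

section
/- Let y : ℝ → ℝ be nonnegative and continuous, continuously differentiable on (0,∞), constant on (-∞,0], and let P be a probability measure on [0,∞). Suppose |y'(t)| ≤ C₁ y(t) + C₂ ∫₀^∞ y(t-s) dP(s) for all t > 0, with constants C₁, C₂ > 0. If there exists κ > 0 with κ > max{ |y'(0+)|/y(0), C₁ + C₂ ∫₀^∞ e^{κs} dP(s) }, then for all t > 0 and s > 0 one has e^{-κs} y(t) < y(t-s) < e^{κs} y(t). -/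
open MeasureTheory Real Set

private lemma flip_aux (c a b : ℝ) (h : a < Real.exp c * b) : Real.exp (-c) * a < b := by
  have h2 := mul_lt_mul_of_pos_left h (Real.exp_pos (-c))
  rwa [← mul_assoc, ← Real.exp_add, neg_add_cancel, Real.exp_zero, one_mul] at h2

private lemma gronwall_aux (y : ℝ → ℝ) (κ a b : ℝ)
    (hy_cont : Continuous y)
    (hdiff : ∀ τ ∈ Set.Ioo a b, DifferentiableAt ℝ y τ)
    (hbd : ∀ τ ∈ Set.Ioo a b, |deriv y τ| < κ * y τ)
    {p q : ℝ} (hap : a ≤ p) (hpq : p < q) (hqb : q ≤ b) :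
    y q < Real.exp (κ * (q - p)) * y p ∧ y p < Real.exp (κ * (q - p)) * y q := by
  have hg : StrictMonoOn (fun τ => Real.exp (κ * τ) * y τ) (Set.Icc a b) := by
    apply strictMonoOn_of_deriv_pos (convex_Icc a b)
    · exact ((Real.continuous_exp.comp (continuous_const.mul continuous_id)).mul hy_cont).continuousOn
    · intro τ hτ
      rw [interior_Icc] at hτ
      have hd := (hdiff τ hτ).hasDerivAt
      have he : HasDerivAt (fun x : ℝ => Real.exp (κ * x)) (Real.exp (κ * τ) * κ) τ := by
        simpa using ((hasDerivAt_id τ).const_mul κ).exp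
      have hE := he.mul hd
      rw [show deriv (fun τ => Real.exp (κ * τ) * y τ) τ = _ from hE.deriv]
      have habs := abs_lt.mp (hbd τ hτ)
      nlinarith [Real.exp_pos (κ * τ)]
  have hf : StrictAntiOn (fun τ => Real.exp (-(κ * τ)) * y τ) (Set.Icc a b) := by
    apply strictAntiOn_of_deriv_neg (convex_Icc a b)
    · exact ((Real.continuous_exp.comp (continuous_const.mul continuous_id).neg).mul hy_cont).continuousOn
    · intro τ hτ
      rw [interior_Icc] at hτ
      have hd := (hdiff τ hτ).hasDerivAt
      have he : HasDerivAt (fun x : ℝ => Real.exp (-(κ * x))) (Real.exp (-(κ * τ)) * (-κ)) τ := by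
        simpa using (((hasDerivAt_id τ).const_mul κ).neg).exp
      have hE := he.mul hd
      rw [show deriv (fun τ => Real.exp (-(κ * τ)) * y τ) τ = _ from hE.deriv]
      have habs := abs_lt.mp (hbd τ hτ)
      nlinarith [Real.exp_pos (-(κ * τ))]
  have hpmem : p ∈ Set.Icc a b := ⟨hap, hpq.le.trans hqb⟩
  have hqmem : q ∈ Set.Icc a b := ⟨hap.trans hpq.le, hqb⟩
  constructor
  · have h1 := hf hpmem hqmem hpq
    simp only at h1
    have h2 := mul_lt_mul_of_pos_left h1 (Real.exp_pos (κ * q))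
    rw [← mul_assoc, ← Real.exp_add, add_neg_cancel, Real.exp_zero, one_mul,
      ← mul_assoc, ← Real.exp_add] at h2
    have harg : κ * q + -(κ * p) = κ * (q - p) := by ring
    rwa [harg] at h2
  · have h1 := hg hpmem hqmem hpq
    simp only at h1
    have h2 := mul_lt_mul_of_pos_left h1 (Real.exp_pos (-(κ * p)))
    rw [← mul_assoc, ← Real.exp_add, neg_add_cancel, Real.exp_zero, one_mul,
      ← mul_assoc, ← Real.exp_add] at h2
    have harg : -(κ * p) + κ * q = κ * (q - p) := by ring
    rwa [harg] at h2

set_option maxHeartbeats 1000000 in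
theorem stmt_0
    (y : ℝ → ℝ) (P : Measure ℝ) [IsProbabilityMeasure P]
    (hP0 : P (Set.Iio 0) = 0)
    (hy_nonneg : ∀ t, 0 ≤ y t)
    (hy_cont : Continuous y)
    (hy_C1 : ContDiffOn ℝ 1 y (Set.Ioi 0))
    (hy_const : ∀ t ≤ (0:ℝ), y t = y 0)
    (hy0_pos : 0 < y 0)
    (C₁ C₂ : ℝ) (hC₁ : 0 < C₁) (hC₂ : 0 < C₂)
    (hint : ∀ t > (0:ℝ), Integrable (fun s => y (t - s)) P)
    (hineq : ∀ t > (0:ℝ),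
      |deriv y t| ≤ C₁ * y t + C₂ * ∫ s, y (t - s) ∂P)
    (y0' : ℝ) (hy0' : HasDerivWithinAt y y0' (Set.Ici 0) 0)
    (κ : ℝ) (hκ : 0 < κ)
    (hκint : Integrable (fun s => Real.exp (κ * s)) P)
    (hκgt : max (|y0'| / y 0) (C₁ + C₂ * ∫ s, Real.exp (κ * s) ∂P) < κ) :
    ∀ t > (0:ℝ), ∀ s > (0:ℝ),
      Real.exp (-κ * s) * y t < y (t - s) ∧ y (t - s) < Real.exp (κ * s) * y t := by
  classical
  set M := ∫ s, Real.exp (κ * s) ∂P with hMdef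
  have hae0 : ∀ᵐ s ∂P, 0 ≤ s := by
    rw [ae_iff]
    convert hP0 using 2
    ext s; simp [not_le, Set.mem_Iio]
  have hM1 : (1:ℝ) ≤ M := by
    have h1 : ∫ _ : ℝ, (1:ℝ) ∂P = 1 := by simp
    rw [← h1]
    refine integral_mono_ae (integrable_const 1) hκint ?_
    filter_upwards [hae0] with s hs
    calc (1:ℝ) = Real.exp 0 := Real.exp_zero.symm
    _ ≤ Real.exp (κ * s) := Real.exp_le_exp.mpr (by positivity)
  have hK : C₁ + C₂ * M < κ := lt_of_le_of_lt (le_max_right _ _) hκgt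
  have hC12 : C₁ + C₂ < κ := by nlinarith
  have hdiff : ∀ τ ∈ Set.Ioi (0:ℝ), DifferentiableAt ℝ y τ := fun τ hτ =>
    (hy_C1.differentiableOn one_ne_zero).differentiableAt (Ioi_mem_nhds hτ)
  have hdc : ContinuousOn (deriv y) (Set.Ioi 0) := by
    have h := hy_C1.continuousOn_derivWithin isOpen_Ioi.uniqueDiffOn le_rfl
    exact h.congr fun τ hτ => (derivWithin_of_isOpen isOpen_Ioi hτ).symm
  set U : Set ℝ := {τ | 0 < τ ∧ 0 < y τ ∧ |deriv y τ| < κ * y τ} with hUdef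
  have hUopen : IsOpen U := by
    rw [isOpen_iff_mem_nhds]
    rintro τ ⟨h0, hy, hd⟩
    have hda : ContinuousAt (deriv y) τ := hdc.continuousAt (Ioi_mem_nhds h0)
    have e1 : ∀ᶠ x in nhds τ, 0 < x := eventually_gt_nhds h0
    have e2 : ∀ᶠ x in nhds τ, 0 < y x :=
      ContinuousAt.eventually_lt continuousAt_const hy_cont.continuousAt hy
    have e3 : ∀ᶠ x in nhds τ, |deriv y x| < κ * y x :=
      ContinuousAt.eventually_lt hda.abs (continuousAt_const.mul hy_cont.continuousAt) hd
    filter_upwards [e1, e2, e3] with x h1 h2 h3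
    exact ⟨h1, h2, h3⟩
  -- Step 1: U contains a right neighborhood of 0
  set ε := min (y 0 / 2) ((κ - (C₁ + C₂)) * y 0 / (2 * (κ + C₁ + C₂))) with hεdef
  have hεpos : 0 < ε := by
    apply lt_min (by positivity)
    apply div_pos (mul_pos (by linarith) hy0_pos) (by positivity)
  have hεy : ε < y 0 := lt_of_le_of_lt (min_le_left _ _) (by linarith)
  have hεkey : (C₁ + C₂) * (y 0 + ε) < κ * (y 0 - ε) := by
    have h2 : ε ≤ (κ - (C₁ + C₂)) * y 0 / (2 * (κ + C₁ + C₂)) := min_le_right _ _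
    have hden : (0:ℝ) < 2 * (κ + C₁ + C₂) := by linarith
    rw [le_div_iff₀ hden] at h2
    nlinarith
  obtain ⟨δ', hδ'pos, hδ'⟩ := Metric.continuousAt_iff.mp hy_cont.continuousAt ε hεpos
  set δ := δ' / 2 with hδdef
  have hδpos : 0 < δ := by positivity
  have hynear : ∀ u : ℝ, |u| ≤ δ → |y u - y 0| < ε := by
    intro u hu
    have : dist u 0 < δ' := by rw [Real.dist_eq, sub_zero]; linarith
    have := hδ' this
    rwa [Real.dist_eq] at this
  have hstep1 : ∀ τ ∈ Set.Ioc (0:ℝ) δ, τ ∈ U := by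
    rintro τ ⟨hτ0, hτδ⟩
    have hyτ := hynear τ (by rw [abs_of_pos hτ0]; exact hτδ)
    obtain ⟨hl, hr⟩ := abs_lt.mp hyτ
    refine ⟨hτ0, by linarith, ?_⟩
    have hintb : ∫ s, y (τ - s) ∂P ≤ y 0 + ε := by
      have h1 : ∫ _ : ℝ, (y 0 + ε) ∂P = y 0 + ε := by simp
      rw [← h1]
      refine integral_mono_ae (hint τ hτ0) (integrable_const _) ?_
      filter_upwards [hae0] with s hs
      by_cases h : τ - s ≤ 0
      · rw [hy_const _ h]; linarith
      · push_neg at h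
        have hb := hynear (τ - s) (by rw [abs_of_pos h]; linarith)
        have := (abs_lt.mp hb).2
        linarith
    have hle := hineq τ hτ0
    have b1 : C₁ * y τ ≤ C₁ * (y 0 + ε) := by nlinarith
    have b2 : C₂ * (∫ s, y (τ - s) ∂P) ≤ C₂ * (y 0 + ε) := by nlinarith
    have b3 : κ * (y 0 - ε) ≤ κ * y τ := by nlinarith
    linarith
  -- Step 2 + continuous induction
  have hA : ∀ τ : ℝ, 0 < τ → τ ∈ U := by
    by_contra hcon
    push_neg at hcon
    obtain ⟨t₁, ht₁, ht₁U⟩ := hcon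
    set B : Set ℝ := {τ | 0 < τ ∧ τ ∉ U} with hBdef
    have hBne : B.Nonempty := ⟨t₁, ht₁, ht₁U⟩
    have hBbdd : BddBelow B := ⟨0, fun b hb => hb.1.le⟩
    set t₀ := sInf B with ht₀def
    have hδt₀ : δ ≤ t₀ := by
      apply le_csInf hBne
      intro b hb
      by_contra h
      push_neg at h
      exact hb.2 (hstep1 b ⟨hb.1, h.le⟩)
    have ht₀pos : 0 < t₀ := lt_of_lt_of_le hδpos hδt₀
    have hQ : ∀ τ ∈ Set.Ioo (0:ℝ) t₀, τ ∈ U := by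
      intro τ hτ
      by_contra h
      exact absurd (csInf_le hBbdd ⟨hτ.1, h⟩) (not_le.mpr hτ.2)
    have comp : ∀ p q : ℝ, 0 ≤ p → p < q → q ≤ t₀ →
        y q < Real.exp (κ * (q - p)) * y p ∧ y p < Real.exp (κ * (q - p)) * y q := by
      intro p q hp hpq hq
      exact gronwall_aux y κ 0 t₀ hy_cont
        (fun τ hτ => hdiff τ hτ.1) (fun τ hτ => (hQ τ hτ).2.2) hp hpq hq
    have hyt₀ : 0 < y t₀ := by
      have h := (comp 0 t₀ le_rfl ht₀pos le_rfl).2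
      nlinarith [Real.exp_pos (κ * (t₀ - 0)), hy_nonneg t₀]
    have hub : ∀ s : ℝ, 0 ≤ s → y (t₀ - s) ≤ Real.exp (κ * s) * y t₀ := by
      intro s hs
      rcases eq_or_lt_of_le hs with h0 | hspos
      · rw [← h0]; simp
      · by_cases hts : 0 < t₀ - s
        · have h := (comp (t₀ - s) t₀ hts.le (by linarith) le_rfl).2
          have harg : t₀ - (t₀ - s) = s := by ring
          rw [harg] at h
          exact h.le
        · push_neg at hts
          rw [hy_const _ (by linarith)]
          have h := (comp 0 t₀ le_rfl ht₀pos le_rfl).2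
          rw [sub_zero] at h
          have hee : Real.exp (κ * t₀) ≤ Real.exp (κ * s) :=
            Real.exp_le_exp.mpr (by nlinarith)
          nlinarith [hyt₀]
    have hintb : ∫ s, y (t₀ - s) ∂P ≤ M * y t₀ := by
      have h1 : ∫ s, Real.exp (κ * s) * y t₀ ∂P = M * y t₀ := by
        rw [hMdef, integral_mul_const]
      rw [← h1]
      refine integral_mono_ae (hint t₀ ht₀pos) (hκint.mul_const _) ?_
      filter_upwards [hae0] with s hs
      exact hub s hs
    have ht₀U : t₀ ∈ U := by
      refine ⟨ht₀pos, hyt₀, ?_⟩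
      have b1 : C₂ * (∫ s, y (t₀ - s) ∂P) ≤ C₂ * (M * y t₀) :=
        mul_le_mul_of_nonneg_left hintb hC₂.le
      calc |deriv y t₀| ≤ C₁ * y t₀ + C₂ * ∫ s, y (t₀ - s) ∂P := hineq t₀ ht₀pos
      _ ≤ C₁ * y t₀ + C₂ * (M * y t₀) := by linarith
      _ = (C₁ + C₂ * M) * y t₀ := by ring
      _ < κ * y t₀ := mul_lt_mul_of_pos_right hK hyt₀
    have hcl : t₀ ∈ closure B := csInf_mem_closure hBne hBbdd
    rw [mem_closure_iff_nhds] at hcl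
    obtain ⟨x, hxU, hxB⟩ := hcl U (hUopen.mem_nhds ht₀U)
    exact hxB.2 hxU
  -- Conclusion
  have compA : ∀ p q : ℝ, 0 ≤ p → p < q →
      y q < Real.exp (κ * (q - p)) * y p ∧ y p < Real.exp (κ * (q - p)) * y q := by
    intro p q hp hpq
    exact gronwall_aux y κ 0 q hy_cont (fun τ hτ => hdiff τ hτ.1)
      (fun τ hτ => (hA τ hτ.1).2.2) hp hpq le_rfl
  intro t ht s hs
  by_cases hts : 0 < t - s
  · obtain ⟨h1, h2⟩ := compA (t - s) t hts.le (by linarith)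
    have harg : t - (t - s) = s := by ring
    rw [harg] at h1 h2
    constructor
    · have := flip_aux (κ * s) _ _ h1
      rwa [neg_mul]
    · exact h2
  · push_neg at hts
    rw [hy_const (t - s) (by linarith)]
    obtain ⟨h1, h2⟩ := compA 0 t le_rfl ht
    rw [sub_zero] at h1 h2
    have hee : Real.exp (κ * t) ≤ Real.exp (κ * s) :=
      Real.exp_le_exp.mpr (by nlinarith)
    constructor
    · have h3 : y t < Real.exp (κ * s) * y 0 :=
        lt_of_lt_of_le h1 (mul_le_mul_of_nonneg_right hee hy0_pos.le)
      have := flip_aux (κ * s) _ _ h3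
      rwa [neg_mul]
    · exact lt_of_lt_of_le h2 (mul_le_mul_of_nonneg_right hee (hy_nonneg t))
end

section
/- For real numbers a, b with 0 < a ≤ b and κ̄ > 0, the Taylor-expansion lower bound holds: (4/((b-a)κ̄²))·( b e^{κ̄b} - a e^{κ̄a} - (e^{κ̄b}-e^{κ̄a})/κ̄ ) ≥ 2(a+b)/κ̄ + (4/3)(a² + ab + b²) + (κ̄/2)(a³ + a²b + ab² + b³). -/
open Real

lemma exp_quad (t : ℝ) (ht : 0 ≤ t) : 1 + t + t ^ 2 / 2 ≤ Real.exp t := by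
  have h := Real.sum_le_exp_of_nonneg ht 3
  simp [Finset.sum_range_succ, Nat.factorial] at h
  linarith

theorem stmt_8 (a b κ : ℝ) (ha : 0 < a) (hab : a < b) (hκ : 0 < κ) :
    2 * (a + b) / κ + (4 / 3) * (a ^ 2 + a * b + b ^ 2) +
        (κ / 2) * (a ^ 3 + a ^ 2 * b + a * b ^ 2 + b ^ 3) ≤
      (4 / ((b - a) * κ ^ 2)) *
        (b * Real.exp (κ * b) - a * Real.exp (κ * a) -
          (Real.exp (κ * b) - Real.exp (κ * a)) / κ) := by
  have hκ' : κ ≠ 0 := hκ.ne'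
  have hba : 0 < b - a := sub_pos.2 hab
  set F : ℝ → ℝ := fun x => (κ * x - 1) * Real.exp (κ * x) -
      (κ ^ 2 * x ^ 2 / 2 + κ ^ 3 * x ^ 3 / 3 + κ ^ 4 * x ^ 4 / 8) with hFdef
  have hderiv : ∀ x : ℝ, HasDerivAt F
      (κ ^ 2 * x * Real.exp (κ * x) - (κ ^ 2 * x + κ ^ 3 * x ^ 2 + κ ^ 4 * x ^ 3 / 2)) x := by
    intro x
    have h1 : HasDerivAt (fun x : ℝ => κ * x) κ x := by
      simpa using (hasDerivAt_id x).const_mul κ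
    have h2 : HasDerivAt (fun x : ℝ => Real.exp (κ * x)) (Real.exp (κ * x) * κ) x :=
      (Real.hasDerivAt_exp (κ * x)).comp x h1
    have h3 : HasDerivAt (fun x : ℝ => κ * x - 1) κ x := h1.sub_const 1
    have h4 := h3.mul h2
    have h5 : HasDerivAt (fun x : ℝ => κ ^ 2 * x ^ 2 / 2 + κ ^ 3 * x ^ 3 / 3 + κ ^ 4 * x ^ 4 / 8)
        (κ ^ 2 * x + κ ^ 3 * x ^ 2 + κ ^ 4 * x ^ 3 / 2) x := by
      have := ((((hasDerivAt_pow 2 x).const_mul (κ ^ 2)).div_const 2).add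
        (((hasDerivAt_pow 3 x).const_mul (κ ^ 3)).div_const 3)).add
        (((hasDerivAt_pow 4 x).const_mul (κ ^ 4)).div_const 8)
      exact this.congr_deriv (by push_cast; ring)
    have := h4.sub h5
    exact this.congr_deriv (by ring)
  have hmono : MonotoneOn F (Set.Ici (0 : ℝ)) := by
    apply monotoneOn_of_deriv_nonneg (convex_Ici 0)
    · exact fun x _ => ((hderiv x).continuousAt).continuousWithinAt
    · exact fun x _ => (hderiv x).differentiableAt.differentiableWithinAt
    · intro x hx
      rw [interior_Ici] at hx
      rw [(hderiv x).deriv]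
      have hxpos : 0 < x := hx
      have ht : 0 ≤ κ * x := by positivity
      have := exp_quad (κ * x) ht
      nlinarith [mul_nonneg (mul_pos (pow_pos hκ 2) hxpos).le (sub_nonneg.2 this)]
  have key := hmono (Set.mem_Ici.2 ha.le) (Set.mem_Ici.2 (ha.trans hab).le) hab.le
  rw [← sub_nonneg]
  have h2 : (4 / ((b - a) * κ ^ 2)) *
        (b * Real.exp (κ * b) - a * Real.exp (κ * a) -
          (Real.exp (κ * b) - Real.exp (κ * a)) / κ) -
      (2 * (a + b) / κ + (4 / 3) * (a ^ 2 + a * b + b ^ 2) +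
        (κ / 2) * (a ^ 3 + a ^ 2 * b + a * b ^ 2 + b ^ 3)) =
      (4 / ((b - a) * κ ^ 3)) * (F b - F a) := by
    simp only [hFdef]
    field_simp
    ring
  rw [h2]
  exact mul_nonneg (by positivity) (sub_nonneg.2 key)
end
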